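/- Let φ = {a_1 < a_2 < ⋯ < a_r} ⊆ [n] with r ≥ 1, and let Γ = ⟨⟨φ⟩⟩_{[n]} be the corresponding Schubert (shifted) matroid complex. Let 1 ≤ s ≤ r ≤ t ≤ n. Then the interval minor Γ(s,t) = {γ ⊆ [s,t] : γ ∪ [1,s−1] ∈ Γ} equals the Schubert matroid complex on the linearly ordered set [s,t] = {s,…,t} with top facet ψ, i.e., Γ(s,t) consists of all subsets of the (r−s+1)-element subsets of [s,t] that are Gale-below ψ, where ψ = {b_1 < ⋯ < b_{r−s+1}} with b_i = min(a_{s+i−1}, t−r+s+i−1) for 1 ≤ i ≤ r−s+1. -/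

import Mathlib

/-- Gale order on finite subsets of `ℕ` of the same cardinality: `s ≤_G t` iff the
`i`-th smallest element of `s` is at most the `i`-th smallest element of `t`, for all `i`. -/
def galeLE (s t : Finset ℕ) : Prop :=
  s.card = t.card ∧ ∀ i < s.card,
    (s.sort (· ≤ ·)).getD i 0 ≤ (t.sort (· ≤ ·)).getD i 0

/-- The Schubert (shifted) matroid complex on the interval `[lo,hi]` with top facet
`top`: its faces are all subsets of the sets `ψ ⊆ [lo,hi]` with `ψ ≤_G top`
(in particular `|ψ| = |top|`). -/
def schubertOn (lo hi : ℕ) (top : Finset ℕ) : Set (Finset ℕ) :=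
  {γ | ∃ ψ : Finset ℕ, ψ ⊆ Finset.Icc lo hi ∧ galeLE ψ top ∧ γ ⊆ ψ}

/-- The interval minor `Γ(s,t) = {γ ⊆ [s,t] : γ ∪ [1,s−1] ∈ Γ}`. -/
def minorC (Γ : Set (Finset ℕ)) (s t : ℕ) : Set (Finset ℕ) :=
  {γ | γ ⊆ Finset.Icc s t ∧ γ ∪ Finset.Icc 1 (s - 1) ∈ Γ}

open Finset
lemma sorted_getD_le_iff (x : ℕ) :
    ∀ (L : List ℕ), L.Pairwise (· ≤ ·) → ∀ i, i < L.length →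
      (L.getD i 0 ≤ x ↔ i < (L.filter (fun y => decide (y ≤ x))).length) := by
  intro L
  induction L with
  | nil => intro _ i hi; simp at hi
  | cons a L ih =>
    intro hs i hi
    have hs' : L.Pairwise (· ≤ ·) := hs.of_cons
    by_cases hax : a ≤ x
    · cases i with
      | zero => simp [hax]
      | succ i =>
        have h := ih hs' i (by simpa using hi)
        simpa [hax, List.getD_cons_succ] using h
    · have hall : ∀ b ∈ a :: L, ¬ b ≤ x := by
        intro b hb hbx
        rcases List.mem_cons.mp hb with rfl | hb
        · exact hax hbx
        · exact hax (le_trans (List.rel_of_pairwise_cons hs hb) hbx)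
      have hf : (a :: L).filter (fun y => decide (y ≤ x)) = [] := by
        rw [List.filter_eq_nil_iff]
        intro b hb; simpa using hall b hb
      rw [hf]
      simp only [List.length_nil, Nat.not_lt_zero, iff_false]
      have hmem : (a :: L).getD i 0 ∈ a :: L := by
        rw [List.getD_eq_getElem _ _ hi]; exact List.getElem_mem _
      exact hall _ hmem

lemma length_filter_sort (p : ℕ → Prop) [DecidablePred p] (s : Finset ℕ) :
    ((s.sort (· ≤ ·)).filter (fun y => decide (p y))).length = (s.filter p).card := by
  have : (s.filter p).card = Multiset.card (Multiset.filter p s.val) := rfl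
  rw [this, ← Finset.sort_eq s (· ≤ ·), Multiset.filter_coe]
  simp

/-- bridge: for `i < s.card`, the `i`-th sorted element is `≤ x` iff more than `i`
elements of `s` are `≤ x`. -/
lemma getD_le_iff (s : Finset ℕ) (x i : ℕ) (hi : i < s.card) :
    ((s.sort (· ≤ ·)).getD i 0 ≤ x ↔ i < (s.filter (fun y => y ≤ x)).card) := by
  have h := sorted_getD_le_iff x (s.sort (· ≤ ·)) (Finset.pairwise_sort _ _) i
    (by rwa [Finset.length_sort])
  rwa [length_filter_sort (fun y => y ≤ x) s] at h

lemma count_partition (x : ℕ) (s : Finset ℕ) :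
    (s.filter (fun y => x < y)).card + (s.filter (fun y => y ≤ x)).card = s.card := by
  have h : s.filter (fun y => y ≤ x) = s.filter (fun y => ¬ x < y) :=
    Finset.filter_congr (by intro y _; simp [not_lt])
  rw [h, Finset.card_filter_add_card_filter_not]

lemma gale_iff_count (s t : Finset ℕ) :
    galeLE s t ↔ s.card = t.card ∧
      ∀ x, (s.filter (fun y => x < y)).card ≤ (t.filter (fun y => x < y)).card := by
  constructor
  · rintro ⟨hc, h⟩
    refine ⟨hc, fun x => ?_⟩
    have hflip : (t.filter (fun y => y ≤ x)).card ≤ (s.filter (fun y => y ≤ x)).card := by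
      by_cases h0 : (t.filter (fun y => y ≤ x)).card = 0
      · omega
      · set i := (t.filter (fun y => y ≤ x)).card - 1 with hidef
        have hit : i < t.card := by
          have := Finset.card_filter_le t (fun y => y ≤ x); omega
        have his : i < s.card := by omega
        have h1 : (t.sort (· ≤ ·)).getD i 0 ≤ x := by
          rw [getD_le_iff t x i hit]; omega
        have h2 : (s.sort (· ≤ ·)).getD i 0 ≤ x := le_trans (h i his) h1
        rw [getD_le_iff s x i his] at h2; omega
    have p1 := count_partition x s
    have p2 := count_partition x t
    omega
  · rintro ⟨hc, h⟩
    refine ⟨hc, fun i hi => ?_⟩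
    set x := (t.sort (· ≤ ·)).getD i 0 with hx
    have hit : i < t.card := hc ▸ hi
    have h1 : i < (t.filter (fun y => y ≤ x)).card := by
      rw [← getD_le_iff t x i hit]
    have hflip : (t.filter (fun y => y ≤ x)).card ≤ (s.filter (fun y => y ≤ x)).card := by
      have p1 := count_partition x s
      have p2 := count_partition x t
      have := h x
      omega
    rw [getD_le_iff s x i hi]
    omega

lemma exists_initial_segment (m : ℕ) : ∀ (S : Finset ℕ), m ≤ S.card →
    ∃ F, F ⊆ S ∧ F.card = m ∧ ∀ y ∈ S, y ∉ F → ∀ f ∈ F, f < y := by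
  induction m with
  | zero => intro S _; exact ⟨∅, empty_subset _, card_empty, by simp⟩
  | succ m ih =>
    intro S hm
    obtain ⟨F, hFS, hFc, hF⟩ := ih S (by omega)
    have hne : (S \ F).Nonempty := by
      rw [← Finset.card_pos, Finset.card_sdiff_of_subset hFS]; omega
    set y0 := (S \ F).min' hne with hy0
    have hy0m : y0 ∈ S \ F := Finset.min'_mem _ hne
    have hy0S : y0 ∈ S := (Finset.mem_sdiff.mp hy0m).1
    have hy0F : y0 ∉ F := (Finset.mem_sdiff.mp hy0m).2
    refine ⟨insert y0 F, ?_, ?_, ?_⟩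
    · intro z hz; rcases Finset.mem_insert.mp hz with rfl | hz
      · exact hy0S
      · exact hFS hz
    · rw [Finset.card_insert_of_notMem hy0F, hFc]
    · intro y hy hyF f hf
      have hyF' : y ∉ F := fun h => hyF (Finset.mem_insert_of_mem h)
      have hyy0 : y ≠ y0 := fun h => hyF (h ▸ Finset.mem_insert_self _ _)
      rcases Finset.mem_insert.mp hf with hf0 | hf
      · have h1 : y0 ≤ y := Finset.min'_le _ _ (Finset.mem_sdiff.mpr ⟨hy, hyF'⟩)
        omega
      · exact hF y hy hyF' f hf


open Finset
lemma mem_schubertOn_iff (lo hi : ℕ) (top γ : Finset ℕ) (htop : top ⊆ Finset.Icc lo hi) :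
    γ ∈ schubertOn lo hi top ↔ γ ⊆ Finset.Icc lo hi ∧ γ.card ≤ top.card ∧
      ∀ x, (γ.filter (fun y => x < y)).card ≤ (top.filter (fun y => x < y)).card := by
  constructor
  · rintro ⟨ψ, hψIcc, hgale, hγψ⟩
    rw [gale_iff_count] at hgale
    obtain ⟨hcard, hcount⟩ := hgale
    refine ⟨hγψ.trans hψIcc, le_trans (Finset.card_le_card hγψ) hcard.le, fun x => ?_⟩
    exact le_trans (Finset.card_le_card (Finset.filter_subset_filter _ hγψ)) (hcount x)
  · rintro ⟨hγIcc, hcard, hcount⟩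
    obtain ⟨F, hFS, hFc, hF⟩ := exists_initial_segment (top.card - γ.card)
      ((Finset.Icc lo hi) \ γ)
      (by
        rw [Finset.card_sdiff_of_subset hγIcc]
        have := Finset.card_le_card htop
        omega)
    have hdisj : Disjoint γ F := by
      rw [Finset.disjoint_right]
      intro z hz
      exact (Finset.mem_sdiff.mp (hFS hz)).2
    refine ⟨γ ∪ F, ?_, ?_, Finset.subset_union_left⟩
    · intro z hz
      rcases Finset.mem_union.mp hz with hz | hz
      · exact hγIcc hz
      · exact (Finset.mem_sdiff.mp (hFS hz)).1
    · rw [gale_iff_count]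
      have hcardψ : (γ ∪ F).card = top.card := by
        rw [Finset.card_union_of_disjoint hdisj, hFc]; omega
      refine ⟨hcardψ, fun x => ?_⟩
      by_cases hFx : ∀ f ∈ F, f ≤ x
      · have hsub : (γ ∪ F).filter (fun y => x < y) ⊆ γ.filter (fun y => x < y) := by
          intro z hz
          rw [Finset.mem_filter] at hz ⊢
          rcases Finset.mem_union.mp hz.1 with h | h
          · exact ⟨h, hz.2⟩
          · exact absurd hz.2 (by have := hFx z h; omega)
        exact le_trans (Finset.card_le_card hsub) (hcount x)
      · push_neg at hFx
        obtain ⟨f, hfF, hfx⟩ := hFx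
        -- show top.filter (· ≤ x) ⊆ card-wise ψ.filter (· ≤ x)
        have hIccsub : ∀ y, y ∈ Finset.Icc lo hi → y ≤ x → y ∈ γ ∪ F := by
          intro y hy hyx
          by_cases hyγ : y ∈ γ
          · exact Finset.mem_union_left _ hyγ
          · have hyS : y ∈ (Finset.Icc lo hi) \ γ := Finset.mem_sdiff.mpr ⟨hy, hyγ⟩
            by_cases hyF : y ∈ F
            · exact Finset.mem_union_right _ hyF
            · exact absurd (hF y hyS hyF f hfF) (by omega)
        have h1 : (top.filter (fun y => y ≤ x)).card ≤ ((γ ∪ F).filter (fun y => y ≤ x)).card := by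
          apply Finset.card_le_card
          intro z hz
          rw [Finset.mem_filter] at hz ⊢
          exact ⟨hIccsub z (htop hz.1) hz.2, hz.2⟩
        have p1 := count_partition x (γ ∪ F)
        have p2 := count_partition x top
        omega

/-- Interval minors of Schubert matroids: if `Γ = ⟨⟨φ⟩⟩_{[n]}` is the Schubert matroid
with top facet `φ = {a_1 < ⋯ < a_r}` and `1 ≤ s ≤ r ≤ t ≤ n`, then `Γ(s,t)` is the
Schubert matroid complex on `[s,t]` with top facet `ψ = {b_1 < ⋯ < b_{r−s+1}}`, where
`b_i = min(a_{s+i−1}, t−r+s+i−1)`. -/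
theorem schubert_interval_minor
    (n r : ℕ) (hr : 1 ≤ r) (hrn : r ≤ n)
    (a : ℕ → ℕ) (hmono : StrictMonoOn a (Set.Icc 1 r))
    (ha : ∀ i ∈ Finset.Icc 1 r, a i ∈ Finset.Icc 1 n)
    (s t : ℕ) (hs : 1 ≤ s) (hsr : s ≤ r) (hrt : r ≤ t) (htn : t ≤ n) :
    minorC (schubertOn 1 n ((Finset.Icc 1 r).image a)) s t =
      schubertOn s t ((Finset.Icc 1 (r - s + 1)).image
        (fun i => min (a (s + i - 1)) (t - r + s + i - 1))) := by
  set d := r - s + 1 with hd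
  set b : ℕ → ℕ := fun i => min (a (s + i - 1)) (t - r + s + i - 1) with hb
  -- a i ≥ i on [1,r]
  have hai : ∀ i, 1 ≤ i → i ≤ r → i ≤ a i := by
    intro i
    induction i with
    | zero => intro h _; omega
    | succ i ih =>
      intro h1 h2
      by_cases hi0 : i = 0
      · subst hi0
        have := ha 1 (Finset.mem_Icc.mpr ⟨le_refl 1, hr⟩)
        rw [Finset.mem_Icc] at this
        simpa using this.1
      · have hprev := ih (by omega) (by omega)
        have hlt : a i < a (i + 1) := hmono ⟨by omega, by omega⟩ ⟨by omega, by omega⟩ (by omega)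
        omega
  have hamono : ∀ i j, 1 ≤ i → i ≤ j → j ≤ r → a i ≤ a j := by
    intro i j h1 hij hjr
    exact hmono.monotoneOn ⟨by omega, by omega⟩ ⟨by omega, by omega⟩ hij
  -- counts over images
  have hcount_img : ∀ (S : Finset ℕ) (f : ℕ → ℕ), Set.InjOn f ↑S → ∀ x : ℕ,
      ((S.image f).filter (fun y => x < y)).card = (S.filter (fun j => x < f j)).card := by
    intro S f hf x
    rw [Finset.filter_image]
    exact Finset.card_image_of_injOn (hf.mono (Finset.coe_subset.2 (Finset.filter_subset _ _)))
  have hainj : Set.InjOn a ↑(Finset.Icc 1 r) := by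
    rw [Finset.coe_Icc]; exact hmono.injOn
  have hbmono : ∀ i j, 1 ≤ i → i < j → j ≤ d → b i < b j := by
    intro i j h1 hij hjd
    have h1' : a (s + i - 1) < a (s + j - 1) :=
      hmono ⟨by omega, by omega⟩ ⟨by omega, by omega⟩ (by omega)
    simp only [hb]
    omega
  have hbinj : Set.InjOn b ↑(Finset.Icc 1 d) := by
    intro i hi j hj hij
    simp only [Finset.coe_Icc, Set.mem_Icc] at hi hj
    by_contra hne
    rcases lt_or_gt_of_ne hne with h | h
    · have := hbmono i j hi.1 h hj.2; omega
    · have := hbmono j i hj.1 h hi.2; omega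
  have hφcard : ((Finset.Icc 1 r).image a).card = r := by
    rw [Finset.card_image_of_injOn hainj, Nat.card_Icc]; omega
  have htop2card : ((Finset.Icc 1 d).image b).card = d := by
    rw [Finset.card_image_of_injOn hbinj, Nat.card_Icc]; omega
  have hφsub : (Finset.Icc 1 r).image a ⊆ Finset.Icc 1 n := by
    intro y hy
    obtain ⟨i, hi, rfl⟩ := Finset.mem_image.mp hy
    exact ha i hi
  have htop2sub : (Finset.Icc 1 d).image b ⊆ Finset.Icc s t := by
    intro y hy
    obtain ⟨i, hi, rfl⟩ := Finset.mem_image.mp hy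
    rw [Finset.mem_Icc] at hi ⊢
    have h1 : s + i - 1 ≤ a (s + i - 1) := hai (s + i - 1) (by omega) (by omega)
    simp only [hb]
    omega
  ext γ
  simp only [minorC, Set.mem_setOf_eq,
    mem_schubertOn_iff 1 n _ _ hφsub, mem_schubertOn_iff s t _ _ htop2sub,
    hφcard, htop2card]
  constructor
  · rintro ⟨hsub, hδIcc, hδcard, hδcount⟩
    have hdisj : Disjoint γ (Finset.Icc 1 (s - 1)) := by
      rw [Finset.disjoint_right]
      intro z hz hzγ
      have h1 := Finset.mem_Icc.mp (hsub hzγ)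
      have h2 := Finset.mem_Icc.mp hz
      omega
    have hδc : (γ ∪ Finset.Icc 1 (s - 1)).card = γ.card + (s - 1) := by
      rw [Finset.card_union_of_disjoint hdisj, Nat.card_Icc]; omega
    have hkd : γ.card ≤ d := by omega
    refine ⟨hsub, hkd, fun x => ?_⟩
    set q := (γ.filter (fun y => x < y)).card with hq
    by_cases hq0 : q = 0
    · omega
    · -- q ≤ t - x
      have hqt : q + x ≤ t := by
        have hss : γ.filter (fun y => x < y) ⊆ Finset.Icc (x + 1) t := by
          intro z hz
          rw [Finset.mem_filter] at hz
          have := Finset.mem_Icc.mp (hsub hz.1)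
          rw [Finset.mem_Icc]; omega
        have := Finset.card_le_card hss
        rw [Nat.card_Icc] at this
        omega
      -- count of δ at x splits
      have hδsplit : ((γ ∪ Finset.Icc 1 (s - 1)).filter (fun y => x < y)).card
          = q + ((Finset.Icc 1 (s - 1)).filter (fun y => x < y)).card := by
        rw [Finset.filter_union, Finset.card_union_of_disjoint
          (Finset.disjoint_filter_filter hdisj)]
      -- x < a (r - q + 1)
      have hqr : q ≤ r := by
        have := Finset.card_filter_le γ (fun y => x < y); omega
      have hxa : x < a (r - q + 1) := by
        by_contra hcon
        push_neg at hcon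
        have hsubf : (Finset.Icc 1 r).filter (fun j => x < a j) ⊆ Finset.Icc (r - q + 2) r := by
          intro j hj
          rw [Finset.mem_filter, Finset.mem_Icc] at hj
          rw [Finset.mem_Icc]
          by_contra hjc
          have hja : a j ≤ a (r - q + 1) := hamono j (r - q + 1) (by omega) (by omega) (by omega)
          omega
        have hc1 := Finset.card_le_card hsubf
        rw [Nat.card_Icc] at hc1
        have hc2 := hδcount x
        rw [hδsplit, hcount_img _ _ hainj] at hc2
        omega
      -- Icc (d-q+1) d included in the filter for top2
      have hinc : Finset.Icc (d - q + 1) d ⊆ (Finset.Icc 1 d).filter (fun i => x < b i) := by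
        intro i hi
        rw [Finset.mem_Icc] at hi
        rw [Finset.mem_filter, Finset.mem_Icc]
        have hi1 : 1 ≤ i := by omega
        have haa : a (r - q + 1) ≤ a (s + i - 1) :=
          hamono (r - q + 1) (s + i - 1) (by omega) (by omega) (by omega)
        simp only [hb]
        omega
      have hqk : q ≤ γ.card := Finset.card_filter_le γ _
      have hc3 := Finset.card_le_card hinc
      rw [Nat.card_Icc] at hc3
      rw [hcount_img _ _ hbinj]
      omega
  · rintro ⟨hsub, hkd, hγcount⟩
    have hdisj : Disjoint γ (Finset.Icc 1 (s - 1)) := by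
      rw [Finset.disjoint_right]
      intro z hz hzγ
      have h1 := Finset.mem_Icc.mp (hsub hzγ)
      have h2 := Finset.mem_Icc.mp hz
      omega
    have hδc : (γ ∪ Finset.Icc 1 (s - 1)).card = γ.card + (s - 1) := by
      rw [Finset.card_union_of_disjoint hdisj, Nat.card_Icc]; omega
    refine ⟨hsub, ?_, ?_, fun x => ?_⟩
    · intro z hz
      rcases Finset.mem_union.mp hz with hz | hz
      · have := Finset.mem_Icc.mp (hsub hz)
        rw [Finset.mem_Icc]; omega
      · have := Finset.mem_Icc.mp hz
        rw [Finset.mem_Icc]; omega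
    · omega
    · set q := (γ.filter (fun y => x < y)).card with hq
      have hδsplit : ((γ ∪ Finset.Icc 1 (s - 1)).filter (fun y => x < y)).card
          = q + ((Finset.Icc 1 (s - 1)).filter (fun y => x < y)).card := by
        rw [Finset.filter_union, Finset.card_union_of_disjoint
          (Finset.disjoint_filter_filter hdisj)]
      -- split [1,r] into [1,s-1] and [s,r]
      have hsplitIcc : (Finset.Icc 1 r).filter (fun j => x < a j)
          = (Finset.Icc 1 (s - 1)).filter (fun j => x < a j)
            ∪ (Finset.Icc s r).filter (fun j => x < a j) := by
        rw [← Finset.filter_union]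
        congr 1
        ext z
        simp only [Finset.mem_union, Finset.mem_Icc]
        omega
      have hdisj2 : Disjoint ((Finset.Icc 1 (s - 1)).filter (fun j => x < a j))
          ((Finset.Icc s r).filter (fun j => x < a j)) := by
        apply Finset.disjoint_filter_filter
        rw [Finset.disjoint_right]
        intro z hz1 hz2
        have h1 := Finset.mem_Icc.mp hz1
        have h2 := Finset.mem_Icc.mp hz2
        omega
      set A1 := ((Finset.Icc 1 (s - 1)).filter (fun j => x < a j)).card with hA1
      set A2 := ((Finset.Icc s r).filter (fun j => x < a j)).card with hA2
      -- A1 ≥ s - 1 - x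
      have hA1ge : s - 1 ≤ A1 + x := by
        have hpart := Finset.card_filter_add_card_filter_not
          (s := Finset.Icc 1 (s - 1)) (p := fun j => x < a j)
        have hsubc : (Finset.Icc 1 (s - 1)).filter (fun j => ¬ x < a j) ⊆ Finset.Icc 1 x := by
          intro j hj
          rw [Finset.mem_filter, Finset.mem_Icc] at hj
          have := hai j (by omega) (by omega)
          rw [Finset.mem_Icc]
          omega
        have hc := Finset.card_le_card hsubc
        rw [Nat.card_Icc] at hc
        rw [Nat.card_Icc] at hpart
        omega
      -- A2 ≥ q
      have hA2ge : q ≤ A2 := by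
        have h1 := hγcount x
        rw [hcount_img _ _ hbinj] at h1
        have h2 : (Finset.Icc 1 d).filter (fun i => x < b i)
            ⊆ (Finset.Icc 1 d).filter (fun i => x < a (s + i - 1)) := by
          apply Finset.monotone_filter_right
          intro i _ hi
          simp only [hb] at hi
          omega
        have h3 : ((Finset.Icc 1 d).filter (fun i => x < a (s + i - 1))).card = A2 := by
          apply Finset.card_bij (fun i _ => s + i - 1)
          · intro i hi
            rw [Finset.mem_filter, Finset.mem_Icc] at hi
            rw [Finset.mem_filter, Finset.mem_Icc]
            exact ⟨⟨by omega, by omega⟩, hi.2⟩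
          · intro i hi j hj hij
            rw [Finset.mem_filter, Finset.mem_Icc] at hi hj
            omega
          · intro j hj
            rw [Finset.mem_filter, Finset.mem_Icc] at hj
            refine ⟨j - s + 1, ?_, by omega⟩
            rw [Finset.mem_filter, Finset.mem_Icc]
            have heq : s + (j - s + 1) - 1 = j := by omega
            rw [heq]
            exact ⟨⟨by omega, by omega⟩, hj.2⟩
        have h4 := Finset.card_le_card h2
        omega
      have hcard_split : ((Finset.Icc 1 r).filter (fun j => x < a j)).card = A1 + A2 := by
        rw [hsplitIcc, Finset.card_union_of_disjoint hdisj2]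
      rw [hδsplit, hcount_img _ _ hainj, hcard_split]
      have hIccx : ((Finset.Icc 1 (s - 1)).filter (fun y => x < y)).card ≤ s - 1 - x := by
        have hss : (Finset.Icc 1 (s - 1)).filter (fun y => x < y) ⊆ Finset.Icc (x + 1) (s - 1) := by
          intro z hz
          rw [Finset.mem_filter, Finset.mem_Icc] at hz
          rw [Finset.mem_Icc]
          omega
        have := Finset.card_le_card hss
        rw [Nat.card_Icc] at this
        omega
      omega
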